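/- If κ = λ⁺ is the successor of a regular cardinal λ > ω, then κ does not carry a uniform indecomposable ultrafilter; that is, there is no uniform ultrafilter over κ that is μ-indecomposable for every cardinal μ ∈ [ℵ₁, κ). -/

import Mathlib

open Cardinal

/-- An ultrafilter `U` over `I` is `μ`-decomposable if there is `f : I → μ` such that
`f ⁻¹' H ∉ U` for every `H ⊆ μ` of cardinality `< μ`. -/
def MuDecomposable {I : Type} (U : Ultrafilter I) (μ : Cardinal.{0}) : Prop :=
  ∃ f : I → μ.out, ∀ H : Set μ.out, #H < μ → f ⁻¹' H ∉ U

/-- `U` is uniform: every member has full cardinality. -/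
def UniformUF {I : Type} (U : Ultrafilter I) : Prop := ∀ X ∈ U, #X = #I

/-- If `κ = λ⁺` is the successor of a regular cardinal `λ > ω`, then `κ` carries no
uniform ultrafilter that is `μ`-indecomposable for every cardinal `μ ∈ [ℵ₁, κ)`. -/
theorem bounded_of_lt_cof_type {α : Type} (s : α → α → Prop) [IsWellOrder α s] (S : Set α)
    (hS : #S < (Ordinal.type s).cof) : ∃ a, ∀ x ∈ S, s x a := by
  classical
  letI := linearOrderOfSTO s
  haveI : WellFoundedLT α := ⟨(IsWellOrder.toIsWellFounded (r := s)).wf⟩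
  have htype : Ordinal.type s = Ordinal.type (α := α) (· < ·) := rfl
  rw [htype, Ordinal.cof_type] at hS
  by_contra h
  push_neg at h
  refine (Order.cof_le (s := S) (fun x => ?_)).not_gt hS
  obtain ⟨y, hy, hxy⟩ := h x
  exact ⟨y, hy, not_lt.mp hxy⟩

theorem stmt4 {K : Type} (lam : Cardinal.{0}) (hreg : lam.IsRegular) (hlam : ℵ₀ < lam)
    (hK : #K = Order.succ lam) :
    ¬ ∃ U : Ultrafilter K, UniformUF U ∧
        ∀ μ : Cardinal.{0}, Cardinal.aleph 1 ≤ μ → μ < Order.succ lam →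
          ¬ MuDecomposable U μ := by
  rintro ⟨U, hu, hind⟩
  classical
  have hlam0 : ℵ₀ ≤ lam := hlam.le
  have hlam1 : Cardinal.aleph 1 ≤ lam := by
    rw [← Cardinal.succ_aleph0]; exact Order.succ_le_of_lt hlam
  -- a well-order of `K` of minimal order type
  obtain ⟨r, wo, hr⟩ := Cardinal.ord_eq K
  haveI := wo
  -- every final segment of the well-order belongs to `U`
  have hcompl_small : ∀ j : K, #({i : K | r j i}ᶜ : Set K) ≤ lam := by
    intro j
    have h1 : ({i : K | r j i}ᶜ : Set K) ⊆ {i : K | r i j} ∪ {j} := by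
      intro i hi
      rcases trichotomous_of r i j with h | h | h
      · exact Or.inl h
      · exact Or.inr (by simp [h])
      · exact absurd h hi
    have h2 : #({i : K | r i j} : Set K) ≤ lam := by
      have hlt : (Ordinal.typein r j).card < #K := Cardinal.card_typein_lt j hr
      rw [hK] at hlt
      have heq : #({i : K | r i j} : Set K) = (Ordinal.typein r j).card :=
        (Ordinal.card_typein j).symm
      rw [heq]
      exact Order.lt_succ_iff.mp hlt
    calc #({i : K | r j i}ᶜ : Set K) ≤ #(({i : K | r i j} ∪ {j} : Set K)) :=
          Cardinal.mk_le_mk_of_subset h1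
      _ ≤ #({i : K | r i j} : Set K) + #({j} : Set K) := Cardinal.mk_union_le _ _
      _ ≤ lam + 1 := by
          gcongr
          simp
      _ = lam := Cardinal.add_one_eq hlam0
  have hseg : ∀ j : K, {i : K | r j i} ∈ U := by
    intro j
    by_contra h
    have hc : ({i : K | r j i}ᶜ : Set K) ∈ U := Ultrafilter.compl_mem_iff_notMem.mpr h
    have := hu _ hc
    rw [hK] at this
    exact absurd (this ▸ hcompl_small j) (by simp [not_le.mpr (Order.lt_succ lam)])
  -- injections from initial segments into `lam.out`
  haveI : Nonempty lam.out := by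
    rw [← Cardinal.mk_ne_zero_iff, Cardinal.mk_out]
    exact (hreg.pos).ne'
  have hsmall : ∀ i : K, #{j : K // r j i} ≤ lam := by
    intro i
    rw [← Ordinal.card_typein]
    have hlt : (Ordinal.typein r i).card < #K := Cardinal.card_typein_lt i hr
    rw [hK] at hlt
    exact Order.lt_succ_iff.mp hlt
  have he : ∀ i : K, Nonempty ({j : K // r j i} ↪ lam.out) := by
    intro i
    rw [← Cardinal.le_def, Cardinal.mk_out]
    exact hsmall i
  let e : ∀ i : K, {j : K // r j i} ↪ lam.out := fun i => Classical.choice (he i)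
  -- the functions `p j : K → lam.out`
  let p : K → K → lam.out := fun j i =>
    if h : r j i then e i ⟨j, h⟩ else Classical.arbitrary _
  -- lam-indecomposability gives a small `U`-large preimage for each `p j`
  have hlamind := hind lam hlam1 (Order.lt_succ lam)
  rw [MuDecomposable] at hlamind
  push_neg at hlamind
  have hlamind' : ∀ f : K → lam.out, ∃ H : Set lam.out, #H < lam ∧ f ⁻¹' H ∈ U := by
    intro f
    obtain ⟨H, h1, h2⟩ := hlamind f
    exact ⟨H, h1, by tauto⟩
  choose H Hsmall HmemU using fun j => hlamind' (p j)
  -- a well-order of `lam.out` of minimal order type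
  obtain ⟨s, wos, hs⟩ := Cardinal.ord_eq lam.out
  haveI := wos
  have hcofs : Ordinal.cof (Ordinal.type s) = lam := by
    rw [← hs, Cardinal.mk_out]
    exact hreg.cof_eq
  -- bound each `H j`
  have hbdd : ∀ j : K, ∃ a : lam.out, ∀ x ∈ H j, s x a := by
    intro j
    exact bounded_of_lt_cof_type s _ (by rw [hcofs]; exact Hsmall j)
  choose γ hγ using hbdd
  -- stabilize the bound on a set `E` of full size
  obtain ⟨γ0, hγ0⟩ : ∃ γ0 : lam.out, lam < #(γ ⁻¹' {γ0}) := by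
    have := Cardinal.infinite_pigeonhole_card_lt γ
      (by rw [Cardinal.mk_out, hK]; exact Order.lt_succ lam) (by rw [hK]; exact hlam0.trans (Order.le_succ lam))
    obtain ⟨a, ha⟩ := this
    exact ⟨a, by rwa [Cardinal.mk_out] at ha⟩
  set E : Set K := γ ⁻¹' {γ0} with hE
  -- the small "trash" set `P`
  set P : Set lam.out := {x | s x γ0} with hP
  have hν : #P < lam := by
    have : #P = (Ordinal.typein s γ0).card := by rw [Ordinal.card_typein]; rfl
    rw [this]
    have := Cardinal.card_typein_lt γ0 hs
    rwa [Cardinal.mk_out] at this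
  -- the auxiliary cardinal μc ∈ [ℵ₁, lam]
  set ν : Cardinal := #P with hνdef
  set μc : Cardinal := Order.succ (max ν ℵ₀) with hμc
  have hμreg : μc.IsRegular := Cardinal.isRegular_succ (le_max_right _ _)
  have hμlam : μc ≤ lam := Order.succ_le_of_lt (max_lt hν hlam)
  have hμ1 : Cardinal.aleph 1 ≤ μc := by
    rw [← Cardinal.succ_aleph0]
    exact Order.succ_le_succ (le_max_right _ _)
  have hμind := hind μc hμ1 (lt_of_le_of_lt hμlam (Order.lt_succ lam))
  rw [MuDecomposable] at hμind
  push_neg at hμind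
  have hμind' : ∀ f : K → μc.out, ∃ H' : Set μc.out, #H' < μc ∧ f ⁻¹' H' ∈ U := by
    intro f
    obtain ⟨H', h1, h2⟩ := hμind f
    exact ⟨H', h1, by tauto⟩
  -- a well-order of `μc.out` of minimal order type
  obtain ⟨t, wot, ht⟩ := Cardinal.ord_eq μc.out
  haveI := wot
  have hcoft : Ordinal.cof (Ordinal.type t) = μc := by
    rw [← ht, Cardinal.mk_out]
    exact hμreg.cof_eq
  -- choose μc-many elements of E
  have hβ : Nonempty (μc.out ↪ E) := by
    rw [← Cardinal.le_def, Cardinal.mk_out]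
    exact hμlam.trans hγ0.le
  obtain ⟨β⟩ := hβ
  -- the U-large sets A a
  set A : μc.out → Set K := fun a => {i : K | ∃ h : r ((β a) : K) i, e i ⟨(β a : K), h⟩ ∈ H (β a)}
    with hA
  have hAU : ∀ a : μc.out, A a ∈ U := by
    intro a
    have h1 : (p ((β a) : K)) ⁻¹' (H (β a)) ∩ {i : K | r ((β a) : K) i} ⊆ A a := by
      rintro i ⟨hi1, hi2⟩
      have hri : r ((β a : K)) i := hi2
      refine ⟨hri, ?_⟩
      have heq2 : p ((β a) : K) i = e i ⟨(β a : K), hri⟩ := dif_pos hri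
      rwa [← heq2]
    exact U.toFilter.mem_of_superset (Filter.inter_mem (HmemU _) (hseg _)) h1
  -- each point belongs to fewer than μc of the sets A a
  have hSsmall : ∀ i : K, #{a : μc.out | i ∈ A a} < μc := by
    intro i
    have hinj : Nonempty (↥{a : μc.out | i ∈ A a} ↪ ↥P) := by
      refine ⟨⟨fun a => ⟨e i ⟨(β a.1 : K), a.2.choose⟩, ?_⟩, ?_⟩⟩
      · have h2 := a.2.choose_spec
        have hEa : γ ((β a.1 : K)) = γ0 := (β a.1).2
        have := hγ (β a.1 : K) _ h2
        rwa [hEa] at this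
      · rintro ⟨a1, ha1⟩ ⟨a2, ha2⟩ hEq
        simp only [Subtype.mk.injEq] at hEq
        have hsub := (e i).injective hEq
        have hval0 := Subtype.ext_iff.mp hsub
        have hval : (β a1 : K) = (β a2 : K) := hval0
        have hβeq : β a1 = β a2 := Subtype.ext hval
        exact Subtype.ext (β.injective hβeq)
    have := Cardinal.le_def _ _ |>.mpr hinj
    exact lt_of_le_of_lt this (lt_of_le_of_lt (le_max_left ν ℵ₀) (Order.lt_succ _))
  -- the witnessing function g for μc-decomposability
  have hb : ∀ i : K, ∃ a : μc.out, ∀ b ∈ {a : μc.out | i ∈ A a}, t b a := by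
    intro i
    exact bounded_of_lt_cof_type t _ (by rw [hcoft]; exact hSsmall i)
  choose g hg using hb
  -- contradiction
  obtain ⟨H', hH'small, hH'U⟩ := hμind' g
  obtain ⟨a0, ha0⟩ : ∃ a : μc.out, ∀ x ∈ H', t x a :=
    bounded_of_lt_cof_type t _ (by rw [hcoft]; exact hH'small)
  have hmem : g ⁻¹' H' ∩ A a0 ∈ U := Filter.inter_mem hH'U (hAU a0)
  obtain ⟨i, hi1, hi2⟩ := Ultrafilter.nonempty_of_mem hmem
  have h1 : t (g i) a0 := ha0 _ hi1
  have h2 : t a0 (g i) := hg i a0 hi2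
  exact absurd (_root_.trans h1 h2) (irrefl _)
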